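/- Fix μ ∈ ℝ and σ > 0, and let M*(x) = (dN(μ,σ²)/dN(0,σ²+μ²))(x) be the likelihood ratio of N(μ,σ²) to N(0, σ²+μ²). Then for every σ₀ > 0, E_{X ~ N(0,σ₀²)}[M*(X)] ≤ 1, with equality when σ₀² = σ² + μ². Hence M* is an e-value for the composite null {N(0,σ₀²) : σ₀ > 0}. -/

import Mathlib

open MeasureTheory ProbabilityTheory NNReal ENNReal

lemma integral_rexp_quadratic {b : ℝ} (hb : b < 0) (c d : ℝ) :
    ∫ x : ℝ, Real.exp (b * x ^ 2 + c * x + d)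
      = Real.sqrt (Real.pi / (-b)) * Real.exp (d - c ^ 2 / (4 * b)) := by
  have hb' : (b : ℂ).re < 0 := hb
  have h := integral_cexp_quadratic hb' (c : ℂ) (d : ℂ)
  have h1 : (∫ x : ℝ, Complex.exp ((b : ℂ) * (x : ℂ) ^ 2 + (c : ℂ) * (x : ℂ) + (d : ℂ)))
      = ((∫ x : ℝ, Real.exp (b * x ^ 2 + c * x + d) : ℝ) : ℂ) := by
    rw [show ((∫ x : ℝ, Real.exp (b * x ^ 2 + c * x + d) : ℝ) : ℂ)
        = ∫ x : ℝ, ((Real.exp (b * x ^ 2 + c * x + d) : ℝ) : ℂ) from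
      (integral_ofReal (𝕜 := ℂ)).symm]
    congr 1 with x
    push_cast [Complex.ofReal_exp]
    ring_nf
  have h2 : ((Real.pi : ℂ) / -(b : ℂ)) ^ (1 / 2 : ℂ)
      = ((Real.sqrt (Real.pi / -b) : ℝ) : ℂ) := by
    have hnb : (0:ℝ) ≤ Real.pi / -b := div_nonneg Real.pi_pos.le (by linarith)
    rw [Real.sqrt_eq_rpow]
    rw [show ((1 : ℂ) / 2) = ((1 / 2 : ℝ) : ℂ) by norm_num]
    rw [← Complex.ofReal_neg, ← Complex.ofReal_div, ← Complex.ofReal_cpow hnb]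
  rw [h1, h2] at h
  have h3 : Complex.exp ((d : ℂ) - (c : ℂ) ^ 2 / (4 * (b : ℂ)))
      = ((Real.exp (d - c ^ 2 / (4 * b)) : ℝ) : ℂ) := by
    push_cast [Complex.ofReal_exp]
    ring_nf
  rw [h3, ← Complex.ofReal_mul] at h
  exact_mod_cast h

/-- `t * exp (1 - t) ≤ 1` for all real `t`. -/
lemma mul_exp_one_sub_le_one (t : ℝ) : t * Real.exp (1 - t) ≤ 1 := by
  have h : t ≤ Real.exp (t - 1) := by
    have := Real.add_one_le_exp (t - 1)
    linarith
  calc t * Real.exp (1 - t) ≤ Real.exp (t - 1) * Real.exp (1 - t) := by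
        have := Real.exp_pos (1 - t)
        nlinarith
    _ = 1 := by rw [← Real.exp_add]; norm_num

/-- The likelihood ratio `M*(x) = dN(μ,σ²)/dN(0,σ²+μ²) (x)
  = (√(σ²+μ²)/σ)·exp(−(x−μ)²/(2σ²) + x²/(2(σ²+μ²)))` satisfies
`E_{N(0,σ₀)}[M*] ≤ 1` for every `σ₀ > 0`, with equality when `σ₀² = σ² + μ²`. -/
theorem stmt_3 (μ σ : ℝ) (hσ : 0 < σ) :
    ∀ σ₀ : ℝ, 0 < σ₀ →
      (∫ x, (Real.sqrt (σ ^ 2 + μ ^ 2) / σ) *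
            Real.exp (-(x - μ) ^ 2 / (2 * σ ^ 2) + x ^ 2 / (2 * (σ ^ 2 + μ ^ 2)))
          ∂(gaussianReal 0 (Real.toNNReal (σ₀ ^ 2))) ≤ 1) ∧
      (σ₀ ^ 2 = σ ^ 2 + μ ^ 2 →
        ∫ x, (Real.sqrt (σ ^ 2 + μ ^ 2) / σ) *
            Real.exp (-(x - μ) ^ 2 / (2 * σ ^ 2) + x ^ 2 / (2 * (σ ^ 2 + μ ^ 2)))
          ∂(gaussianReal 0 (Real.toNNReal (σ₀ ^ 2))) = 1) := by
  intro σ₀ hσ₀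
  set y : ℝ := σ ^ 2 + μ ^ 2 with hy_def
  set v : ℝ := σ₀ ^ 2 with hv_def
  have hy : 0 < y := by positivity
  have hv : 0 < v := by positivity
  set Z : ℝ := μ ^ 2 * v + σ ^ 2 * y with hZ_def
  have hZ : 0 < Z := by positivity
  -- coefficients of the quadratic
  set b : ℝ := 1 / (2 * y) - 1 / (2 * σ ^ 2) - 1 / (2 * v) with hb_def
  have hb : b < 0 := by
    have h1 : 1 / (2 * y) ≤ 1 / (2 * σ ^ 2) := by
      apply one_div_le_one_div_of_le (by positivity)
      nlinarith
    have h2 : 0 < 1 / (2 * v) := by positivity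
    simp only [hb_def]; linarith
  set c : ℝ := μ / σ ^ 2 with hc_def
  set d : ℝ := -μ ^ 2 / (2 * σ ^ 2) with hd_def
  -- step 1: rewrite the gaussian integral as a Lebesgue integral
  have hvNN : ((Real.toNNReal v : ℝ≥0) : ℝ) = v := Real.coe_toNNReal _ hv.le
  have hvNN0 : Real.toNNReal v ≠ 0 := by
    simp only [ne_eq, Real.toNNReal_eq_zero, not_le]; exact hv
  have step1 : ∫ x, (Real.sqrt y / σ) *
        Real.exp (-(x - μ) ^ 2 / (2 * σ ^ 2) + x ^ 2 / (2 * y))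
        ∂(gaussianReal 0 (Real.toNNReal v))
      = ∫ x : ℝ, gaussianPDFReal 0 (Real.toNNReal v) x *
          ((Real.sqrt y / σ) *
            Real.exp (-(x - μ) ^ 2 / (2 * σ ^ 2) + x ^ 2 / (2 * y))) := by
    rw [gaussianReal_of_var_ne_zero _ hvNN0]
    have hmeas : Measurable fun x : ℝ =>
        Real.toNNReal (gaussianPDFReal 0 (Real.toNNReal v) x) :=
      (measurable_gaussianPDFReal 0 (Real.toNNReal v)).real_toNNReal
    have : (gaussianPDF 0 (Real.toNNReal v)) = fun x =>
        ((Real.toNNReal (gaussianPDFReal 0 (Real.toNNReal v) x) : ℝ≥0) : ℝ≥0∞) := by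
      funext x; rfl
    rw [this, integral_withDensity_eq_integral_smul hmeas]
    congr 1 with x
    rw [NNReal.smul_def, smul_eq_mul, Real.coe_toNNReal _
      (gaussianPDFReal_nonneg 0 (Real.toNNReal v) x)]
  -- step 2: the integrand is `K * exp (b x² + c x + d)`
  set K : ℝ := (Real.sqrt y / σ) * (Real.sqrt (2 * Real.pi * v))⁻¹ with hK_def
  have hK : 0 < K := by
    apply mul_pos (div_pos (Real.sqrt_pos.mpr hy) hσ)
    rw [inv_pos]
    exact Real.sqrt_pos.mpr (by positivity)
  have step2 : ∀ x : ℝ, gaussianPDFReal 0 (Real.toNNReal v) x *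
        ((Real.sqrt y / σ) * Real.exp (-(x - μ) ^ 2 / (2 * σ ^ 2) + x ^ 2 / (2 * y)))
      = K * Real.exp (b * x ^ 2 + c * x + d) := by
    intro x
    rw [gaussianPDFReal, hvNN]
    rw [show (Real.sqrt (2 * Real.pi * v))⁻¹ * Real.exp (-(x - 0) ^ 2 / (2 * v)) *
        ((Real.sqrt y / σ) * Real.exp (-(x - μ) ^ 2 / (2 * σ ^ 2) + x ^ 2 / (2 * y)))
      = K * (Real.exp (-(x - 0) ^ 2 / (2 * v)) *
          Real.exp (-(x - μ) ^ 2 / (2 * σ ^ 2) + x ^ 2 / (2 * y))) by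
        rw [hK_def]; ring]
    rw [← Real.exp_add]
    congr 2
    have hσ2 : σ ^ 2 ≠ 0 := by positivity
    have hv' : v ≠ 0 := hv.ne'
    have hy' : y ≠ 0 := hy.ne'
    field_simp [hb_def, hc_def, hd_def]
    rw [hb_def, hc_def, hd_def]
    field_simp
    ring
  -- step 3: evaluate the integral
  have step3 : (∫ x : ℝ, K * Real.exp (b * x ^ 2 + c * x + d))
      = K * (Real.sqrt (Real.pi / (-b)) * Real.exp (d - c ^ 2 / (4 * b))) := by
    rw [MeasureTheory.integral_const_mul, integral_rexp_quadratic hb]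
  -- step 4: simplify the constant and the exponent
  have hnegb : -b = Z / (2 * v * σ ^ 2 * y) := by
    have hσ2 : σ ^ 2 ≠ 0 := by positivity
    field_simp [hb_def, hZ_def, hy_def]
    have hv' : v ≠ 0 := hv.ne'
    have hy' : y ≠ 0 := hy.ne'
    rw [hb_def]
    field_simp
    rw [hZ_def, hy_def]
    ring
  have hKsqrt : K * Real.sqrt (Real.pi / (-b)) = y / Real.sqrt Z := by
    have h1 : K * Real.sqrt (Real.pi / (-b)) = Real.sqrt (K ^ 2 * (Real.pi / (-b))) := by
      rw [Real.sqrt_mul (by positivity), Real.sqrt_sq hK.le]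
    rw [h1]
    have h2 : K ^ 2 * (Real.pi / (-b)) = y ^ 2 / Z := by
      rw [hnegb, hK_def]
      rw [mul_pow, div_pow, inv_pow, Real.sq_sqrt hy.le,
        Real.sq_sqrt (by positivity : (0:ℝ) ≤ 2 * Real.pi * v)]
      have hσ2 : σ ^ 2 ≠ 0 := by positivity
      field_simp
    rw [h2, Real.sqrt_div (by positivity), Real.sqrt_sq hy.le]
  have hexp : d - c ^ 2 / (4 * b) = (Z - y ^ 2) / (2 * Z) := by
    have hb' : b ≠ 0 := hb.ne
    have hσ2 : σ ^ 2 ≠ 0 := by positivity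
    have hZy : Z - y ^ 2 = μ ^ 2 * (v - y) := by
      simp only [hZ_def, hy_def]; ring
    have hbZ : b = -Z / (2 * v * σ ^ 2 * y) := by
      rw [neg_div]; linarith
    rw [hbZ, hd_def, hc_def, hZy]
    have hZ' : Z ≠ 0 := hZ.ne'
    have hv' : v ≠ 0 := hv.ne'
    have hy' : y ≠ 0 := hy.ne'
    field_simp
    simp only [hZ_def, hy_def]
    ring
  -- the value of the integral
  have hval : ∫ x, (Real.sqrt y / σ) *
        Real.exp (-(x - μ) ^ 2 / (2 * σ ^ 2) + x ^ 2 / (2 * y))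
        ∂(gaussianReal 0 (Real.toNNReal v))
      = (y / Real.sqrt Z) * Real.exp ((Z - y ^ 2) / (2 * Z)) := by
    rw [step1]
    simp_rw [step2]
    rw [step3, ← mul_assoc, hKsqrt, hexp]
  constructor
  · -- inequality
    rw [hval]
    set V : ℝ := (y / Real.sqrt Z) * Real.exp ((Z - y ^ 2) / (2 * Z)) with hV_def
    have hV0 : 0 ≤ V := by positivity
    have hVsq : V ^ 2 = (y ^ 2 / Z) * Real.exp (1 - y ^ 2 / Z) := by
      rw [hV_def, mul_pow, div_pow, Real.sq_sqrt hZ.le, ← Real.exp_nat_mul]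
      congr 2
      field_simp
      ring
    have hle : V ^ 2 ≤ 1 := by
      rw [hVsq]; exact mul_exp_one_sub_le_one _
    exact (pow_le_one_iff_of_nonneg hV0 two_ne_zero).mp hle
  · -- equality when v = y
    intro hvy
    rw [hval]
    have hZy : Z = y ^ 2 := by
      rw [hZ_def, hvy]; simp only [hy_def]; ring
    rw [hZy, Real.sqrt_sq hy.le, div_self hy.ne', sub_self, zero_div, Real.exp_zero, mul_one]
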